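/- Let f : U → ℝⁿ be a local homeomorphism on the closed ball B̄(0, r̃) ⊆ ℝⁿ mapping 0 to p, which on the open ball B(0, r₃) ⊇ B̄(0, r̃) is a C¹ local diffeomorphism satisfying e^{−c}‖w‖ ≤ ‖Df(v)w‖ ≤ e^{c}‖w‖. If r₄ < e^{−c} r₃ and r̃ = e^{c} r₄, then the Euclidean ball B(p, r₄) is contained in f(B̄(0, r̃)). -/

import Mathlib

open Set Metric Real
open Filter Topology

abbrev stmt13Euc (n : ℕ) := EuclideanSpace ℝ (Fin n)

set_option maxHeartbeats 1000000 in
/-- Second inclusion of Lemma 2.6: the ball B(p, r₄) is contained in the image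
of the closed ball of radius r̃ = e^c r₄. -/
theorem stmt_13
    {n : ℕ} (c r₃ r₄ rtilde : ℝ) (hc : 0 < c) (hr₃ : 0 < r₃) (hr₄ : 0 < r₄)
    (hr₄r₃ : r₄ < exp (-c) * r₃) (hrt : rtilde = exp c * r₄)
    (f : EuclideanSpace ℝ (Fin n) → EuclideanSpace ℝ (Fin n))
    (p : EuclideanSpace ℝ (Fin n)) (hf0 : f 0 = p)
    (hloc : IsLocalHomeomorphOn f (closedBall (0 : EuclideanSpace ℝ (Fin n)) rtilde))
    (hsub : closedBall (0 : EuclideanSpace ℝ (Fin n)) rtilde ⊆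
      ball (0 : EuclideanSpace ℝ (Fin n)) r₃)
    (hC1 : ContDiffOn ℝ 1 f (ball (0 : EuclideanSpace ℝ (Fin n)) r₃))
    (hDf : ∀ v ∈ ball (0 : EuclideanSpace ℝ (Fin n)) r₃,
      ∀ w : EuclideanSpace ℝ (Fin n),
        exp (-c) * ‖w‖ ≤ ‖fderiv ℝ f v w‖ ∧ ‖fderiv ℝ f v w‖ ≤ exp c * ‖w‖) :
    ball p r₄ ⊆ f '' closedBall (0 : EuclideanSpace ℝ (Fin n)) rtilde := by
  intro q hq
  have hrt0 : 0 < rtilde := by rw [hrt]; positivity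
  by_cases hqp : q = p
  · exact ⟨0, by simp [mem_closedBall, hrt0.le], by rw [hf0, hqp]⟩
  set d : ℝ := ‖q - p‖ with hd
  have hd0 : 0 < d := by
    rw [hd, norm_pos_iff]; exact sub_ne_zero.mpr hqp
  have hdr : d < r₄ := by rwa [mem_ball, dist_eq_norm] at hq
  set K : ℝ := exp c * r₄ / d with hK
  have hK0 : 0 < K := by positivity
  have hKd : K * d = rtilde := by rw [hK, hrt]; field_simp
  have hKc : exp c ≤ K := by
    rw [hK, le_div_iff₀ hd0]
    nlinarith [exp_pos c]
  set γ : ℝ → stmt13Euc n := fun t => p + t • (q - p) with hγ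
  have hγcont : Continuous γ := by
    exact continuous_const.add (continuous_id.smul continuous_const)
  set S : Set ℝ := {t | t ∈ Icc (0:ℝ) 1 ∧ ∃ v : stmt13Euc n, ‖v‖ ≤ K * t * d ∧ f v = γ t} with hS
  have h0S : (0:ℝ) ∈ S := by
    refine ⟨⟨le_rfl, zero_le_one⟩, 0, by simp, ?_⟩
    simp [hγ, hf0]
  have hSne : S.Nonempty := ⟨0, h0S⟩
  have hSbdd : BddAbove S := ⟨1, fun t ht => ht.1.2⟩
  set T := sSup S with hT
  have hT0 : 0 ≤ T := le_csSup hSbdd h0S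
  have hT1 : T ≤ 1 := csSup_le hSne fun t ht => ht.1.2
  have hcont : ContinuousOn f (ball (0: stmt13Euc n) r₃) := hC1.continuousOn
  -- closedness: T ∈ S
  have hTS : T ∈ S := by
    obtain ⟨u, hu_mono, hu_tend, huS⟩ := exists_seq_tendsto_sSup hSne hSbdd
    choose v hv hfv using fun m => (huS m).2
    have hvball : ∀ m, v m ∈ closedBall (0: stmt13Euc n) rtilde := by
      intro m
      rw [mem_closedBall, dist_zero_right]
      calc ‖v m‖ ≤ K * u m * d := hv m
        _ ≤ K * 1 * d := by nlinarith [(huS m).1.2, (huS m).1.1]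
        _ = rtilde := by rw [mul_one, hKd]
    obtain ⟨w, hw, φ, hφ, hconv⟩ :=
      (isCompact_closedBall (0: stmt13Euc n) rtilde).tendsto_subseq hvball
    have hwball : w ∈ ball (0: stmt13Euc n) r₃ := hsub hw
    have hfw : Tendsto (fun m => f (v (φ m))) atTop (𝓝 (f w)) :=
      ((hcont.continuousAt (isOpen_ball.mem_nhds hwball)).tendsto).comp hconv
    have huφ : Tendsto (fun m => u (φ m)) atTop (𝓝 T) :=
      hu_tend.comp hφ.tendsto_atTop
    have hγT : Tendsto (fun m => γ (u (φ m))) atTop (𝓝 (γ T)) :=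
      (hγcont.tendsto T).comp huφ
    have hfwγ : f w = γ T := by
      apply tendsto_nhds_unique _ hγT
      simpa only [hfv] using hfw
    have hwnorm : ‖w‖ ≤ K * T * d := by
      have h1 : Tendsto (fun m => ‖v (φ m)‖) atTop (𝓝 ‖w‖) :=
        (continuous_norm.tendsto w).comp hconv
      have h2 : Tendsto (fun m => K * u (φ m) * d) atTop (𝓝 (K * T * d)) := by
        exact ((tendsto_const_nhds.mul huφ).mul tendsto_const_nhds)
      exact le_of_tendsto_of_tendsto' h1 h2 fun m => hv (φ m)
    exact ⟨⟨hT0, hT1⟩, w, hwnorm, hfwγ⟩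
  by_cases hTeq : T = 1
  · obtain ⟨_, v, hv, hfv⟩ := hTS
    rw [hTeq] at hv hfv
    refine ⟨v, ?_, ?_⟩
    · rw [mem_closedBall, dist_zero_right]
      calc ‖v‖ ≤ K * 1 * d := hv
        _ = rtilde := by rw [mul_one, hKd]
    · rw [hfv]; simp [hγ]
  · exfalso
    have hT1' : T < 1 := lt_of_le_of_ne hT1 hTeq
    obtain ⟨hTIcc, v, hvnorm, hfveq⟩ := hTS
    have hvlt : ‖v‖ < rtilde := by
      rw [← hKd]
      nlinarith
    have hvmem : v ∈ closedBall (0: stmt13Euc n) rtilde := by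
      rw [mem_closedBall, dist_zero_right]; exact hvlt.le
    obtain ⟨e, hve, hfe⟩ := hloc v hvmem
    have hγTtarget : γ T ∈ e.target := by
      rw [← hfveq, hfe]; exact e.map_source hve
    have hsymmT : e.symm (γ T) = v := by
      rw [← hfveq, hfe]; exact e.left_inv hve
    -- open neighborhood in parameter space
    set W : Set (stmt13Euc n) := e.target ∩ e.symm ⁻¹' (ball (0: stmt13Euc n) r₃) with hW
    have hWopen : IsOpen W := e.symm.isOpen_inter_preimage isOpen_ball
    have hTW : T ∈ γ ⁻¹' W := by
      refine ⟨hγTtarget, ?_⟩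
      show e.symm (γ T) ∈ ball (0: stmt13Euc n) r₃
      rw [hsymmT]
      exact hsub hvmem
    obtain ⟨δ, hδ0, hδ⟩ := Metric.isOpen_iff.mp (hWopen.preimage hγcont) T hTW
    set T' := min 1 (T + δ/2) with hT'
    have hTT' : T < T' := by
      rw [hT']
      exact lt_min hT1' (by linarith)
    have hT'le : T' ≤ T + δ/2 := min_le_right _ _
    have hsubIcc : Icc T T' ⊆ γ ⁻¹' W := by
      intro t ht
      apply hδ
      rw [mem_ball, Real.dist_eq, abs_of_nonneg (by linarith [ht.1])]
      have := ht.2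
      linarith
    -- derivative bound for the lift
    have hderiv : ∀ t ∈ Icc T T', ∃ z : stmt13Euc n,
        HasDerivAt (fun s => e.symm (γ s)) z t ∧ ‖z‖ ≤ exp c * d := by
      intro t ht
      have hWt := hsubIcc ht
      set x := e.symm (γ t) with hx
      have hxsrc : x ∈ e.source := e.map_target hWt.1
      have hxball : x ∈ ball (0: stmt13Euc n) r₃ := hWt.2
      have hdiff : DifferentiableAt ℝ f x :=
        (hC1.differentiableOn one_ne_zero).differentiableAt (isOpen_ball.mem_nhds hxball)
      set F := fderiv ℝ f x with hF
      have hFinj : Function.Injective F := by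
        intro a b hab
        have h1 := (hDf x hxball (a - b)).1
        rw [map_sub, hab, sub_self, norm_zero] at h1
        have h2 : ‖a - b‖ ≤ 0 := by nlinarith [exp_pos (-c), norm_nonneg (a - b)]
        have : a - b = 0 := norm_le_zero_iff.mp h2
        exact sub_eq_zero.mp this
      set Fl : stmt13Euc n ≃ₗ[ℝ] stmt13Euc n :=
        LinearEquiv.ofInjectiveEndo (F : stmt13Euc n →ₗ[ℝ] stmt13Euc n) hFinj with hFl
      set Fe : stmt13Euc n ≃L[ℝ] stmt13Euc n := Fl.toContinuousLinearEquiv with hFe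
      have hFeF : (Fe : stmt13Euc n →L[ℝ] stmt13Euc n) = F := by
        ext w; rfl
      have hga : ContinuousAt e.symm (γ t) := e.continuousAt_symm hWt.1
      have hfg : ∀ᶠ y in 𝓝 (γ t), f (e.symm y) = y := by
        filter_upwards [e.open_target.mem_nhds hWt.1] with y hy
        rw [hfe]; exact e.right_inv hy
      have hFd : HasFDerivAt f (Fe : stmt13Euc n →L[ℝ] stmt13Euc n) (e.symm (γ t)) := by
        rw [hFeF]; exact hdiff.hasFDerivAt
      have hg' : HasFDerivAt e.symm (Fe.symm : stmt13Euc n →L[ℝ] stmt13Euc n) (γ t) :=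
        hFd.of_local_left_inverse hga hfg
      have hγ' : HasDerivAt γ (q - p) t := by
        have h1 : HasDerivAt (fun s : ℝ => s • (q - p)) ((1:ℝ) • (q - p)) t :=
          (hasDerivAt_id t).smul_const (q - p)
        simpa [hγ, one_smul] using h1.const_add p
      refine ⟨Fe.symm (q - p), hg'.comp_hasDerivAt t hγ', ?_⟩
      have happ : F (Fe.symm (q - p)) = q - p := by
        have h1 := Fe.apply_symm_apply (q - p)
        rwa [← hFeF]
      have h2 := (hDf x hxball (Fe.symm (q - p))).1
      rw [← hF, happ, ← hd] at h2
      have h3 := mul_le_mul_of_nonneg_left h2 (exp_pos c).le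
      rwa [← mul_assoc, ← Real.exp_add, add_neg_cancel, Real.exp_zero, one_mul] at h3
    choose! D hD hDb using hderiv
    have hmv := norm_image_sub_le_of_norm_deriv_le_segment'
      (f := fun s => e.symm (γ s)) (f' := D) (C := exp c * d)
      (fun t ht => (hD t ht).hasDerivWithinAt)
      (fun t ht => hDb t (Ico_subset_Icc_self ht))
      T' (right_mem_Icc.mpr hTT'.le)
    set v' := e.symm (γ T') with hv'
    have hmv2 : ‖v' - v‖ ≤ exp c * d * (T' - T) := by
      simpa [hsymmT] using hmv
    have hT'W : γ T' ∈ W := hsubIcc (right_mem_Icc.mpr hTT'.le)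
    have hfv' : f v' = γ T' := by
      rw [hfe]; exact e.right_inv hT'W.1
    have hv'norm : ‖v'‖ ≤ K * T' * d := by
      have h1 : ‖v'‖ ≤ ‖v' - v‖ + ‖v‖ := by
        simpa using norm_add_le (v' - v) v
      have h3 : exp c * d * (T' - T) ≤ K * d * (T' - T) :=
        mul_le_mul_of_nonneg_right (mul_le_mul_of_nonneg_right hKc hd0.le)
          (sub_nonneg.mpr hTT'.le)
      nlinarith [h1, hmv2, h3, hvnorm]
    have hT'S : T' ∈ S := ⟨⟨by linarith [hTIcc.1], min_le_left _ _⟩, v', hv'norm, hfv'⟩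
    exact absurd (le_csSup hSbdd hT'S) (not_le.mpr hTT')
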